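/- Let p : E → B be a topological fibre bundle whose typical fibre is ℝ^m, over a paracompact Hausdorff base B. Then p admits a continuous global section; moreover, for every closed subset A ⊆ B, any continuous section of p defined on an open neighbourhood of A extends to a continuous global section agreeing with it on A (in particular, any value e ∈ E_b at a point b ∈ B is attained by some global section). -/

import Mathlib

open Set Topology Bundle

section Helpers

/-- Gluing continuity on a union of two closed sets. -/
lemma myContinuousOn_union_of_isClosed {X Y : Type*} [TopologicalSpace X] [TopologicalSpace Y]
    {f : X → Y} {s t : Set X} (hs : IsClosed s) (ht : IsClosed t)
    (hfs : ContinuousOn f s) (hft : ContinuousOn f t) : ContinuousOn f (s ∪ t) := by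
  intro x hx
  have h1 : ContinuousWithinAt f s x := by
    by_cases h : x ∈ s
    · exact hfs x h
    · exact continuousWithinAt_of_notMem_closure (by rwa [hs.closure_eq])
  have h2 : ContinuousWithinAt f t x := by
    by_cases h : x ∈ t
    · exact hft x h
    · exact continuousWithinAt_of_notMem_closure (by rwa [ht.closure_eq])
  exact h1.union h2

/-- A point in a fibre of a fibre bundle, obtained from a point of the model fibre. -/
noncomputable def fiberPoint {B : Type*} [TopologicalSpace B] {F : Type*} [TopologicalSpace F]
    {E : B → Type*} [∀ b, TopologicalSpace (E b)] [TopologicalSpace (Bundle.TotalSpace F E)]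
    [FiberBundle F E] (y : F) (b : B) : E b :=
  cast (congrArg E ((trivializationAt F E b).proj_symm_apply'
      (FiberBundle.mem_baseSet_trivializationAt F E b)))
    ((trivializationAt F E b).toPartialHomeomorph.symm (b, y)).2

end Helpers

section PSec

variable {B : Type*} [TopologicalSpace B] (F : Type*) [TopologicalSpace F] (E : B → Type*)
  [∀ b, TopologicalSpace (E b)] [TopologicalSpace (Bundle.TotalSpace F E)]
  (V : Set B) (W : B → Set B) (s₀ : ∀ b, E b)

/-- A partial section of a bundle, defined over `closure V ∪ ⋃ j ∈ J, closure (W j)` and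
agreeing with a reference section on `closure V`. -/
structure PSec where
  J : Set B
  s : ∀ b, E b
  cont : ContinuousOn
    (fun b => (Bundle.TotalSpace.mk b (s b) : Bundle.TotalSpace F E))
    (closure V ∪ ⋃ j ∈ J, closure (W j))
  agree : ∀ b ∈ closure V, s b = s₀ b

namespace PSec

variable {F E V W s₀}

/-- The domain of a partial section. -/
def dom (σ : PSec F E V W s₀) : Set B := closure V ∪ ⋃ j ∈ σ.J, closure (W j)

omit [TopologicalSpace F] [(b : B) → TopologicalSpace (E b)] in
lemma dom_mono {σ τ : PSec F E V W s₀} (h : σ.J ⊆ τ.J) : σ.dom ⊆ τ.dom :=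
  union_subset_union_right _ (biUnion_subset_biUnion_left h)

instance : Preorder (PSec F E V W s₀) where
  le σ τ := σ.J ⊆ τ.J ∧ ∀ b ∈ σ.dom, τ.s b = σ.s b
  le_refl σ := ⟨subset_rfl, fun _ _ => rfl⟩
  le_trans σ τ υ h1 h2 :=
    ⟨h1.1.trans h2.1, fun b hb => (h2.2 b (dom_mono h1.1 hb)).trans (h1.2 b hb)⟩

lemma contOn (σ : PSec F E V W s₀) : ContinuousOn
    (fun b => (Bundle.TotalSpace.mk b (σ.s b) : Bundle.TotalSpace F E)) σ.dom :=
  σ.cont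

omit [TopologicalSpace F] [(b : B) → TopologicalSpace (E b)] in
lemma exists_ub_of_finite {c : Set (PSec F E V W s₀)} (hc : IsChain (· ≤ ·) c)
    (hne : c.Nonempty) {T : Set B} (hT : T.Finite)
    (h : ∀ j ∈ T, ∃ σ ∈ c, j ∈ σ.J) : ∃ τ ∈ c, ∀ j ∈ T, j ∈ τ.J := by
  revert h
  refine Set.Finite.induction_on T hT ?_ ?_
  · exact fun _ => ⟨hne.choose, hne.choose_spec, fun j hj => absurd hj (notMem_empty j)⟩
  · rintro a s ha hs ih h
    obtain ⟨τ, hτc, hτ⟩ := ih fun j hj => h j (mem_insert_of_mem a hj)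
    obtain ⟨σ, hσc, hσ⟩ := h a (mem_insert a s)
    rcases eq_or_ne σ τ with rfl | hne'
    · exact ⟨σ, hσc, fun j hj => hj.elim (fun hja => hja ▸ hσ) (hτ j)⟩
    · obtain ⟨ρ, hρc, h1, h2⟩ := hc.directedOn σ hσc τ hτc
      exact ⟨ρ, hρc, fun j hj => hj.elim (fun hja => hja ▸ h1.1 hσ) (fun hjs => h2.1 (hτ j hjs))⟩

/-- Chains of partial sections are bounded above. -/
lemma chain_bddAbove (hWlf : LocallyFinite fun j => closure (W j))
    {c : Set (PSec F E V W s₀)} (hc : IsChain (· ≤ ·) c) (hne : c.Nonempty) :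
    ∃ τ : PSec F E V W s₀, ∀ σ ∈ c, σ ≤ τ := by
  classical
  set Jst : Set B := ⋃ σ ∈ c, σ.J with hJst
  set sst : ∀ b, E b :=
    (fun b => if h : ∃ σ ∈ c, b ∈ σ.dom then h.choose.s b else s₀ b) with hsst
  have hcompat : ∀ σ ∈ c, ∀ b ∈ σ.dom, sst b = σ.s b := by
    intro σ hσ b hb
    have h : ∃ σ' ∈ c, b ∈ σ'.dom := ⟨σ, hσ, hb⟩
    simp only [hsst, dif_pos h]
    obtain ⟨hc1, hc2⟩ := h.choose_spec
    rcases eq_or_ne h.choose σ with heq | hne'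
    · rw [heq]
    · rcases hc hc1 hσ hne' with hle | hle
      · exact (hle.2 b hc2).symm
      · exact hle.2 b hb
  have hcont : ContinuousOn
      (fun b => (Bundle.TotalSpace.mk b (sst b) : Bundle.TotalSpace F E))
      (closure V ∪ ⋃ j ∈ Jst, closure (W j)) := by
    intro x hx
    obtain ⟨N, hN, hNfin⟩ := hWlf x
    set T : Set B := {j | (closure (W j) ∩ N).Nonempty} ∩ Jst with hT
    have hTfin : T.Finite := hNfin.inter_of_left _
    obtain ⟨τ, hτc, hτ⟩ := exists_ub_of_finite hc hne hTfin
      (fun j hj => by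
        rcases mem_iUnion₂.1 hj.2 with ⟨σ, hσ, hjσ⟩
        exact ⟨σ, hσ, hjσ⟩)
    have hsub : (closure V ∪ ⋃ j ∈ Jst, closure (W j)) ∩ N ⊆ τ.dom := by
      rintro b ⟨hb | hb, hbN⟩
      · exact Or.inl hb
      · rcases mem_iUnion₂.1 hb with ⟨k, hk, hbk⟩
        exact Or.inr (mem_biUnion (hτ k ⟨⟨b, hbk, hbN⟩, hk⟩) hbk)
    have hxτ : x ∈ τ.dom := hsub ⟨hx, mem_of_mem_nhds hN⟩
    have h1 := (τ.contOn x hxτ).mono hsub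
    have h2 : ContinuousWithinAt
        (fun b => (Bundle.TotalSpace.mk b (sst b) : Bundle.TotalSpace F E))
        ((closure V ∪ ⋃ j ∈ Jst, closure (W j)) ∩ N) x := by
      refine h1.congr (fun b hb => ?_) ?_
      · exact congrArg (Bundle.TotalSpace.mk b) (hcompat τ hτc b (hsub hb))
      · exact congrArg (Bundle.TotalSpace.mk x) (hcompat τ hτc x hxτ)
    exact h2.mono_of_mem_nhdsWithin
      (Filter.inter_mem self_mem_nhdsWithin (mem_nhdsWithin_of_mem_nhds hN))
  have hagree : ∀ b ∈ closure V, sst b = s₀ b := fun b hb =>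
    (hcompat hne.choose hne.choose_spec b (Or.inl hb)).trans (hne.choose.agree b hb)
  refine ⟨⟨Jst, sst, hcont, hagree⟩, fun σ hσ => ⟨subset_iUnion₂ (s := fun σ _ => σ.J) σ hσ,
    fun b hb => hcompat σ hσ b hb⟩⟩

end PSec

end PSec

section Main

variable {B : Type*} [TopologicalSpace B] [ParacompactSpace B] [T2Space B]
  {F : Type*} [TopologicalSpace F] [TietzeExtension.{u_1} F] [Zero F]
  {E : B → Type*} [∀ b, TopologicalSpace (E b)] [TopologicalSpace (Bundle.TotalSpace F E)]
  [FiberBundle F E]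

/-- Extension of local sections of a fibre bundle with solid fibre over a paracompact
Hausdorff base. -/
theorem exists_section_extension (A U : Set B) (hA : IsClosed A) (hU : IsOpen U) (hAU : A ⊆ U)
    (s₀ : ∀ b, E b)
    (hs₀ : ContinuousOn (fun b => (Bundle.TotalSpace.mk b (s₀ b) : Bundle.TotalSpace F E)) U) :
    ∃ s : ∀ b, E b,
      Continuous (fun b => (Bundle.TotalSpace.mk b (s b) : Bundle.TotalSpace F E)) ∧
      ∀ b ∈ A, s b = s₀ b := by
  classical
  letI : ∀ x, Zero (E x) := fun x => ⟨fiberPoint (F := F) (E := E) 0 x⟩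
  obtain ⟨V, hVo, hAV, hVU⟩ := normal_exists_closure_subset hA hU hAU
  -- locally finite refinement of the trivialization base sets
  obtain ⟨v, hvo, hvU, hvlf, hvu⟩ := precise_refinement
    (fun b => (trivializationAt F E b).baseSet)
    (fun b => (trivializationAt F E b).open_baseSet)
    (iUnion_eq_univ_iff.2 fun b => ⟨b, FiberBundle.mem_baseSet_trivializationAt F E b⟩)
  -- shrink it over the closed set Vᶜ
  obtain ⟨W, hVW, hWo, hWv⟩ := exists_subset_iUnion_closure_subset
    (isClosed_compl_iff.2 hVo) hvo (fun x _ => hvlf.point_finite x)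
    (by rw [hvU]; exact subset_univ _)
  have hWlf : LocallyFinite fun j => closure (W j) :=
    (hvlf.subset fun j => subset_closure.trans (hWv j)).closure
  have hDclosed : ∀ σ : PSec F E V W s₀, IsClosed σ.dom := by
    intro σ
    refine isClosed_closure.union ?_
    rw [biUnion_eq_iUnion]
    exact (hWlf.comp_injective Subtype.val_injective).isClosed_iUnion fun j => isClosed_closure
  -- base element
  have hclVU : closure V ⊆ U := hVU
  let σ₀ : PSec F E V W s₀ :=
    ⟨∅, s₀, by simpa [PSec.dom] using hs₀.mono hclVU, fun _ _ => rfl⟩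
  -- Zorn's lemma
  have hzorn : ∀ c : Set (PSec F E V W s₀), IsChain (· ≤ ·) c → BddAbove c := by
    intro c hc
    rcases c.eq_empty_or_nonempty with rfl | hne
    · exact ⟨σ₀, fun σ hσ => absurd hσ (notMem_empty σ)⟩
    · obtain ⟨τ, hτ⟩ := PSec.chain_bddAbove hWlf hc hne
      exact ⟨τ, fun σ hσ => hτ σ hσ⟩
  obtain ⟨μ, hμ⟩ := zorn_le hzorn
  -- the maximal partial section is defined everywhere
  have hfull : μ.J = univ := by
    by_contra hnu
    obtain ⟨j, hj⟩ : ∃ j, j ∉ μ.J := by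
      by_contra h
      push_neg at h
      exact hnu (eq_univ_iff_forall.2 h)
    set e := trivializationAt F E j with he
    have hcl : closure (W j) ⊆ e.baseSet := (hWv j).trans (hvu j)
    have hC : IsClosed (μ.dom ∩ closure (W j)) := (hDclosed μ).inter isClosed_closure
    have hf : ContinuousOn (fun b => (e (Bundle.TotalSpace.mk b (μ.s b))).2)
        (μ.dom ∩ closure (W j)) := by
      refine continuous_snd.comp_continuousOn
        (e.continuousOn.comp (μ.contOn.mono inter_subset_left) ?_)
      intro b hb
      rw [e.mem_source]
      exact hcl hb.2
    obtain ⟨g, hg⟩ := ContinuousMap.exists_restrict_eq hC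
      (⟨_, hf.restrict⟩ : C(↥(μ.dom ∩ closure (W j)), F))
    have hg' : ∀ b (hb : b ∈ μ.dom ∩ closure (W j)),
        g b = (e (Bundle.TotalSpace.mk b (μ.s b))).2 := by
      intro b hb
      have := ContinuousMap.congr_fun hg ⟨b, hb⟩
      simpa using this
    set s' : ∀ b, E b := fun b => if b ∈ μ.dom then μ.s b else e.symm b (g b) with hs'
    have hkey : ∀ b ∈ closure (W j),
        (Bundle.TotalSpace.mk b (s' b) : Bundle.TotalSpace F E) =
          Bundle.TotalSpace.mk b (e.symm b (g b)) := by
      intro b hb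
      by_cases h : b ∈ μ.dom
      · simp only [hs', if_pos h]
        rw [hg' b ⟨h, hb⟩, e.symm_apply_apply_mk (hcl hb)]
      · simp [hs', if_neg h]
    have hcontW : ContinuousOn
        (fun b => (Bundle.TotalSpace.mk b (s' b) : Bundle.TotalSpace F E))
        (closure (W j)) := by
      refine ContinuousOn.congr ?_ hkey
      exact e.continuousOn_symm.comp
        (Continuous.continuousOn (continuous_id.prodMk g.continuous))
        (fun b hb => ⟨hcl hb, mem_univ _⟩)
    have hcontD : ContinuousOn
        (fun b => (Bundle.TotalSpace.mk b (s' b) : Bundle.TotalSpace F E)) μ.dom := by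
      refine ContinuousOn.congr μ.contOn ?_
      intro b hb
      simp [hs', if_pos hb]
    have hcontν : ContinuousOn
        (fun b => (Bundle.TotalSpace.mk b (s' b) : Bundle.TotalSpace F E))
        (closure V ∪ ⋃ k ∈ insert j μ.J, closure (W k)) := by
      refine (myContinuousOn_union_of_isClosed (hDclosed μ) isClosed_closure
        hcontD hcontW).mono ?_
      rw [biUnion_insert]
      rintro x (hx | hx | hx)
      · exact Or.inl (Or.inl hx)
      · exact Or.inr hx
      · exact Or.inl (Or.inr hx)
    have hagree' : ∀ b ∈ closure V, s' b = s₀ b := by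
      intro b hb
      have hbD : b ∈ μ.dom := Or.inl hb
      simp only [hs', if_pos hbD]
      exact μ.agree b hb
    let ν : PSec F E V W s₀ := ⟨insert j μ.J, s', hcontν, hagree'⟩
    have hle : μ ≤ ν := ⟨subset_insert j μ.J, fun b hb => by simp [ν, hs', if_pos hb]⟩
    exact hj ((hμ hle).1 (mem_insert j μ.J))
  have hdom : μ.dom = univ := by
    rw [eq_univ_iff_forall]
    intro b
    by_cases hb : b ∈ V
    · exact Or.inl (subset_closure hb)
    · rcases mem_iUnion.1 (hVW hb) with ⟨k, hk⟩
      exact Or.inr (mem_biUnion (hfull ▸ mem_univ k) (subset_closure hk))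
  refine ⟨μ.s, ?_, fun b hb => μ.agree b (subset_closure (hAV hb))⟩
  rw [← continuousOn_univ, ← hdom]
  exact μ.contOn

end Main

/-- A topological fibre bundle whose typical fibre is `ℝ^m`, over a paracompact Hausdorff
base, admits a continuous global section; moreover every continuous section given on an
open neighbourhood of a closed set `A` extends to a continuous global section agreeing
with it on `A`. -/
theorem fiber_bundle_euclidean_fibre_sections
    {B : Type*} [TopologicalSpace B] [ParacompactSpace B] [T2Space B] {m : ℕ}
    (E : B → Type*) [∀ b, TopologicalSpace (E b)]
    [TopologicalSpace (Bundle.TotalSpace (Fin m → ℝ) E)]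
    [FiberBundle (Fin m → ℝ) E] :
    (∃ s : ∀ b, E b,
        Continuous fun b => (Bundle.TotalSpace.mk b (s b) : Bundle.TotalSpace (Fin m → ℝ) E)) ∧
    ∀ (A U : Set B), IsClosed A → IsOpen U → A ⊆ U →
      ∀ s₀ : ∀ b, E b,
        ContinuousOn (fun b => (Bundle.TotalSpace.mk b (s₀ b) : Bundle.TotalSpace (Fin m → ℝ) E)) U →
        ∃ s : ∀ b, E b,
          Continuous (fun b => (Bundle.TotalSpace.mk b (s b) : Bundle.TotalSpace (Fin m → ℝ) E)) ∧
          ∀ b ∈ A, s b = s₀ b := by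
  constructor
  · obtain ⟨s, hs, -⟩ := exists_section_extension (F := Fin m → ℝ) (E := E) (∅ : Set B) ∅ isClosed_empty isOpen_empty
      subset_rfl (fun b => fiberPoint (F := Fin m → ℝ) (E := E) 0 b) (by simp [continuousOn_empty])
    exact ⟨s, hs⟩
  · intro A U hA hU hAU s₀ hs₀
    exact exists_section_extension A U hA hU hAU s₀ hs₀
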